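/- A Runge–Kutta method with symplecticity conditions b_i a_{ij} + b_j a_{ji} = b_i b_j preserves every quadratic invariant of an autonomous system: if I(x) = xᵀ M x with M symmetric satisfies xᵀ M f(x) = 0 for all x, and stages Y_i = x_n + h ∑_j a_{ij} f(Y_j) with update x_{n+1} = x_n + h ∑_i b_i f(Y_i), then x_{n+1}ᵀ M x_{n+1} = x_nᵀ M x_n. -/

import Mathlib

open Matrix

theorem symplectic_rk_preserves_quadratic_invariant (s n : ℕ) (hs : 0 < s) (hn : 0 < n)
    (f : (Fin n → ℝ) → (Fin n → ℝ))
    (M : Matrix (Fin n) (Fin n) ℝ) (hM : Mᵀ = M)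
    (horth : ∀ y : Fin n → ℝ, y ⬝ᵥ M.mulVec (f y) = 0)
    (h : ℝ) (A : Fin s → Fin s → ℝ) (b : Fin s → ℝ)
    (hsymp : ∀ i j, b i * A i j + b j * A j i = b i * b j)
    (xn : Fin n → ℝ) (Y : Fin s → (Fin n → ℝ))
    (hY : ∀ i, Y i = xn + h • ∑ j, A i j • f (Y j))
    (xnext : Fin n → ℝ)
    (hx : xnext = xn + h • ∑ i, b i • f (Y i)) :
    xnext ⬝ᵥ M.mulVec xnext = xn ⬝ᵥ M.mulVec xn := by
  set g : Fin s → (Fin n → ℝ) := fun i => f (Y i) with hg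
  set B : (Fin n → ℝ) → (Fin n → ℝ) → ℝ := fun x y => x ⬝ᵥ M.mulVec y with hB
  have Bsymm : ∀ x y : Fin n → ℝ, B x y = B y x := by
    intro x y
    simp only [hB]
    rw [dotProduct_mulVec, ← mulVec_transpose, hM, dotProduct_comm]
  have Bsum_r : ∀ (x : Fin n → ℝ) (v : Fin s → Fin n → ℝ),
      B x (∑ i, v i) = ∑ i, B x (v i) := by
    intro x v
    simp only [hB]
    rw [show M.mulVec (∑ i, v i) = ∑ i, M.mulVec (v i) from map_sum M.mulVecLin v _]
    induction (Finset.univ : Finset (Fin s)) using Finset.induction with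
    | empty => simp
    | insert _ _ h ih => simp [Finset.sum_insert h, dotProduct_add, ih]
  have Bsum_l : ∀ (x : Fin n → ℝ) (v : Fin s → Fin n → ℝ),
      B (∑ i, v i) x = ∑ i, B (v i) x := by
    intro x v
    rw [Bsymm, Bsum_r]
    exact Finset.sum_congr rfl fun i _ => Bsymm x (v i)
  have Badd : ∀ x y z : Fin n → ℝ, B (x + y) z = B x z + B y z := by
    intro x y z; simp [hB, add_dotProduct]
  have Badd_r : ∀ x y z : Fin n → ℝ, B x (y + z) = B x y + B x z := by
    intro x y z; simp [hB, mulVec_add, dotProduct_add]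
  have Bsmul_l : ∀ (c : ℝ) (x y : Fin n → ℝ), B (c • x) y = c * B x y := by
    intro c x y; simp [hB, smul_dotProduct, smul_eq_mul]
  have Bsmul_r : ∀ (c : ℝ) (x y : Fin n → ℝ), B x (c • y) = c * B x y := by
    intro c x y; simp [hB, mulVec_smul, dotProduct_smul, smul_eq_mul]
  -- key : B xn (g i) expressed via stage values
  have key : ∀ i, B xn (g i) = - (h * ∑ j, A i j * B (g i) (g j)) := by
    intro i
    have hxn : xn = Y i - h • ∑ j, A i j • g j := by
      rw [hY i]; abel
    have h0 : B (Y i) (g i) = 0 := horth (Y i)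
    calc B xn (g i) = B (Y i) (g i) - B (h • ∑ j, A i j • g j) (g i) := by
          rw [hxn]; simp only [hB, sub_dotProduct]
      _ = - (h * ∑ j, A i j * B (g i) (g j)) := by
          rw [h0, Bsmul_l, Bsum_l]
          have : ∀ j ∈ Finset.univ, B (A i j • g j) (g i) = A i j * B (g i) (g j) := by
            intro j _; rw [Bsmul_l, Bsymm (g j) (g i)]
          rw [Finset.sum_congr rfl this]
          ring
  -- expand B xnext xnext
  have hexp : B xnext xnext = B xn xn + 2 * h * (∑ i, b i * B xn (g i))
      + h ^ 2 * ∑ i, ∑ j, b i * b j * B (g i) (g j) := by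
    rw [hx]
    rw [Badd, Badd_r, Badd_r]
    have h1 : B (h • ∑ i, b i • g i) xn = h * ∑ i, b i * B xn (g i) := by
      rw [Bsmul_l, Bsum_l, Finset.sum_congr rfl fun i _ => by
        rw [Bsmul_l, Bsymm (g i) xn]]
    have h2 : B xn (h • ∑ i, b i • g i) = h * ∑ i, b i * B xn (g i) := by
      rw [Bsmul_r, Bsum_r, Finset.sum_congr rfl fun i _ => Bsmul_r (b i) xn (g i)]
    have h3 : B (h • ∑ i, b i • g i) (h • ∑ i, b i • g i)
        = h ^ 2 * ∑ i, ∑ j, b i * b j * B (g i) (g j) := by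
      rw [Bsmul_l, Bsmul_r, Bsum_l]
      rw [Finset.sum_congr rfl fun i (_ : i ∈ Finset.univ) => by
        rw [Bsmul_l, Bsum_r, Finset.sum_congr rfl fun j (_ : j ∈ Finset.univ) =>
          Bsmul_r (b j) (g i) (g j)]]
      have hin : ∀ i ∈ Finset.univ, b i * ∑ j, b j * B (g i) (g j)
          = ∑ j, b i * b j * B (g i) (g j) := by
        intro i _
        rw [Finset.mul_sum]
        exact Finset.sum_congr rfl fun j _ => by ring
      rw [Finset.sum_congr rfl hin]
      ring
    rw [h1, h2, h3]; ring
  -- cancellation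
  have hcancel : 2 * h * (∑ i, b i * B xn (g i))
      + h ^ 2 * ∑ i, ∑ j, b i * b j * B (g i) (g j) = 0 := by
    have e1 : ∑ i, b i * B xn (g i)
        = - (h * ∑ i, ∑ j, b i * A i j * B (g i) (g j)) := by
      have hin : ∀ i ∈ Finset.univ, b i * B xn (g i)
          = -(h * ∑ j, b i * A i j * B (g i) (g j)) := by
        intro i _
        have hT : ∑ j, b i * A i j * B (g i) (g j)
            = b i * ∑ j, A i j * B (g i) (g j) := by
          rw [Finset.mul_sum]
          exact Finset.sum_congr rfl fun j _ => by ring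
        rw [key i, hT]; ring
      rw [Finset.sum_congr rfl hin]
      rw [Finset.mul_sum]
      rw [← Finset.sum_neg_distrib]
    have e2 : ∑ i, ∑ j, b i * b j * B (g i) (g j)
        = 2 * ∑ i, ∑ j, b i * A i j * B (g i) (g j) := by
      have swap : ∑ i, ∑ j, b i * A i j * B (g i) (g j)
          = ∑ i, ∑ j, b j * A j i * B (g i) (g j) := by
        rw [Finset.sum_comm]
        exact Finset.sum_congr rfl fun i _ => Finset.sum_congr rfl fun j _ => by
          rw [Bsymm (g j) (g i)]
      calc ∑ i, ∑ j, b i * b j * B (g i) (g j)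
          = ∑ i, ∑ j, (b i * A i j + b j * A j i) * B (g i) (g j) := by
            exact Finset.sum_congr rfl fun i _ => Finset.sum_congr rfl fun j _ => by
              rw [hsymp i j]
        _ = (∑ i, ∑ j, b i * A i j * B (g i) (g j))
            + ∑ i, ∑ j, b j * A j i * B (g i) (g j) := by
            rw [← Finset.sum_add_distrib]
            exact Finset.sum_congr rfl fun i _ => by
              rw [← Finset.sum_add_distrib]
              exact Finset.sum_congr rfl fun j _ => by ring
        _ = 2 * ∑ i, ∑ j, b i * A i j * B (g i) (g j) := by rw [← swap]; ring
    rw [e1, e2]; ring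
  have : B xnext xnext = B xn xn := by rw [hexp]; linarith [hcancel]
  simpa [hB] using this
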